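/- Exponential ISS bound from a quadratic Lyapunov LMI: let P ∈ ℝ^{n×n} be symmetric positive definite, ν_1, ν_2 > 0, and M ∈ ℝ^{n×n} be such that for all e, w ∈ ℝ^n, e^T(M^T P + P M)e + 2 e^T P w ≤ −ν_1 ‖e‖² + ν_2 n ‖w‖² (where ‖·‖ is the supremum norm on ℝ^n). If ê : ℝ_{≥0} → ℝ^n is differentiable with ê'(t) = M ê(t) + w(t) and ‖w(t)‖ ≤ d_b for all t, then for all t ≥ 0: ‖ê(t)‖ ≤ √(n λ_max(P)/λ_min(P)) e^{−λ_e t/2} ‖ê(0)‖ + √(ν_2 n /(λ_min(P) λ_e)) d_b, where λ_e = ν_1/(n λ_max(P)). -/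

import Mathlib

open Matrix


lemma sqrt_add_le' {a b : ℝ} (ha : 0 ≤ a) (hb : 0 ≤ b) :
    Real.sqrt (a + b) ≤ Real.sqrt a + Real.sqrt b := by
  have h := Real.sqrt_le_sqrt (show a + b ≤ (Real.sqrt a + Real.sqrt b) ^ 2 by
    nlinarith [Real.sq_sqrt ha, Real.sq_sqrt hb, Real.sqrt_nonneg a, Real.sqrt_nonneg b])
  rwa [Real.sqrt_sq (by positivity)] at h

lemma quad_eq {n : ℕ} {P : Matrix (Fin n) (Fin n) ℝ} (hH : P.IsHermitian) (x : Fin n → ℝ) :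
    ∃ y : Fin n → ℝ, x ⬝ᵥ (P *ᵥ x) = ∑ i, hH.eigenvalues i * (y i * y i) ∧
      x ⬝ᵥ x = ∑ i, y i * y i := by
  set U : Matrix (Fin n) (Fin n) ℝ := (hH.eigenvectorUnitary : Matrix (Fin n) (Fin n) ℝ)
  refine ⟨star U *ᵥ x, ?_, ?_⟩
  · have hx : x ᵥ* U = star U *ᵥ x := by
      ext i
      simp [Matrix.vecMul, Matrix.mulVec, dotProduct, mul_comm]
    conv_lhs => rw [hH.spectral_theorem, Unitary.conjStarAlgAut_apply]
    rw [← Matrix.mulVec_mulVec, ← Matrix.mulVec_mulVec, Matrix.dotProduct_mulVec, hx]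
    simp only [Matrix.mulVec_diagonal, dotProduct, Function.comp,
      RCLike.ofReal_real_eq_id, id_eq, id]
    exact Finset.sum_congr rfl fun i _ => by ring
  · have h1 : (star U)ᵀ * star U = 1 := by
      have h0 := (Unitary.mul_star_self_of_mem hH.eigenvectorUnitary.2)
      have h2 : (star U)ᵀ = U := by
        ext i j; simp [Matrix.transpose, U, Matrix.star_apply]
      rw [h2]; exact h0
    show x ⬝ᵥ x = (star U *ᵥ x) ⬝ᵥ (star U *ᵥ x)
    rw [Matrix.dotProduct_mulVec, Matrix.vecMul_mulVec, h1, Matrix.vecMul_one]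

lemma dot_self_nonneg' {n : ℕ} (x : Fin n → ℝ) : 0 ≤ x ⬝ᵥ x :=
  Finset.sum_nonneg fun i _ => mul_self_nonneg _

lemma norm_sq_le_dot {n : ℕ} (x : Fin n → ℝ) : ‖x‖ ^ 2 ≤ x ⬝ᵥ x := by
  have h : ‖x‖ ≤ Real.sqrt (x ⬝ᵥ x) := by
    refine (pi_norm_le_iff_of_nonneg (Real.sqrt_nonneg _)).mpr fun i => ?_
    rw [Real.norm_eq_abs]
    refine Real.abs_le_sqrt ?_
    have := Finset.single_le_sum (f := fun j => x j * x j)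
      (fun j _ => mul_self_nonneg _) (Finset.mem_univ i)
    simpa [sq, dotProduct] using this
  calc ‖x‖ ^ 2 ≤ Real.sqrt (x ⬝ᵥ x) ^ 2 := by
        exact pow_le_pow_left₀ (norm_nonneg _) h 2
    _ = x ⬝ᵥ x := Real.sq_sqrt (dot_self_nonneg' x)

lemma dot_le_norm_sq {n : ℕ} (x : Fin n → ℝ) : x ⬝ᵥ x ≤ (n : ℝ) * ‖x‖ ^ 2 := by
  calc x ⬝ᵥ x = ∑ i, x i * x i := rfl
    _ ≤ ∑ _i : Fin n, ‖x‖ ^ 2 := by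
        refine Finset.sum_le_sum fun i _ => ?_
        have h := norm_le_pi_norm x i
        rw [Real.norm_eq_abs] at h
        nlinarith [abs_nonneg (x i), sq_abs (x i)]
    _ = (n : ℝ) * ‖x‖ ^ 2 := by simp [Finset.sum_const, mul_comm]


/-- Exponential ISS bound from a quadratic Lyapunov LMI: if
`eᵀ(MᵀP + PM)e + 2 eᵀPw ≤ -ν₁‖e‖² + ν₂ n ‖w‖²` (sup norm) and `ê' = M ê + w` with
`‖w(t)‖ ≤ d_b`, then `‖ê(t)‖ ≤ √(n λmax(P)/λmin(P)) e^{-λₑt/2} ‖ê(0)‖ +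
√(ν₂ n/(λmin(P) λₑ)) d_b` with `λₑ = ν₁/(n λmax(P))`. -/
theorem iss_bound_from_lyapunov_lmi (n : ℕ) (hn : 0 < n)
    (P M : Matrix (Fin n) (Fin n) ℝ) (hH : P.IsHermitian) (hP : P.PosDef)
    (ν1 ν2 db : ℝ) (hν1 : 0 < ν1) (hν2 : 0 < ν2) (hdb : 0 ≤ db)
    (hLMI : ∀ e w : Fin n → ℝ,
      e ⬝ᵥ ((Mᵀ * P + P * M) *ᵥ e) + 2 * (e ⬝ᵥ (P *ᵥ w))
        ≤ -ν1 * ‖e‖ ^ 2 + ν2 * n * ‖w‖ ^ 2)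
    (eh w : ℝ → Fin n → ℝ)
    (hde : ∀ t : ℝ, 0 ≤ t → HasDerivAt eh (M *ᵥ eh t + w t) t)
    (hw : ∀ t : ℝ, 0 ≤ t → ‖w t‖ ≤ db) :
    ∀ t : ℝ, 0 ≤ t →
      ‖eh t‖ ≤ Real.sqrt ((n : ℝ) * (⨆ i, hH.eigenvalues i) / (⨅ i, hH.eigenvalues i))
          * Real.exp (-(ν1 / ((n : ℝ) * ⨆ i, hH.eigenvalues i)) * t / 2) * ‖eh 0‖
        + Real.sqrt (ν2 * n /
            ((⨅ i, hH.eigenvalues i) * (ν1 / ((n : ℝ) * ⨆ i, hH.eigenvalues i)))) * db := by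
  have hne : Nonempty (Fin n) := Fin.pos_iff_nonempty.mp hn
  set lam := hH.eigenvalues with hlam
  set a := ⨅ i, lam i with ha_def
  set b := ⨆ i, lam i with hb_def
  have hbddA : BddAbove (Set.range lam) := (Set.finite_range lam).bddAbove
  have hbddB : BddBelow (Set.range lam) := (Set.finite_range lam).bddBelow
  have hpos : ∀ i, 0 < lam i := fun i => hP.eigenvalues_pos i
  obtain ⟨i0, hi0⟩ := Finite.exists_min lam
  have ha_pos : 0 < a := lt_of_lt_of_le (hpos i0) (le_ciInf hi0)
  have hb_pos : 0 < b := lt_of_lt_of_le (hpos i0) (le_ciSup hbddA i0)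
  have ha_le : ∀ i, a ≤ lam i := fun i => ciInf_le hbddB i
  have hb_le : ∀ i, lam i ≤ b := fun i => le_ciSup hbddA i
  -- quadratic form bounds
  have hquad_ub : ∀ x : Fin n → ℝ, x ⬝ᵥ (P *ᵥ x) ≤ b * (x ⬝ᵥ x) := by
    intro x
    obtain ⟨y, h1, h2⟩ := quad_eq hH x
    rw [h1, h2, Finset.mul_sum]
    exact Finset.sum_le_sum fun i _ => mul_le_mul_of_nonneg_right (hb_le i) (mul_self_nonneg _)
  have hquad_lb : ∀ x : Fin n → ℝ, a * (x ⬝ᵥ x) ≤ x ⬝ᵥ (P *ᵥ x) := by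
    intro x
    obtain ⟨y, h1, h2⟩ := quad_eq hH x
    rw [h1, h2, Finset.mul_sum]
    exact Finset.sum_le_sum fun i _ => mul_le_mul_of_nonneg_right (ha_le i) (mul_self_nonneg _)
  have hPt : Pᵀ = P := by
    ext i j
    have := congrFun (congrFun hH i) j
    simpa using this
  set lamE : ℝ := ν1 / ((n : ℝ) * b) with hlamE
  have hlamE_pos : 0 < lamE := div_pos hν1 (by positivity)
  set c : ℝ := ν2 * n * db ^ 2 with hc
  have hc_nonneg : 0 ≤ c := by positivity
  set V : ℝ → ℝ := fun t => eh t ⬝ᵥ (P *ᵥ eh t) with hVdef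
  set d : ℝ → ℝ := fun t =>
    (M *ᵥ eh t + w t) ⬝ᵥ (P *ᵥ eh t) + eh t ⬝ᵥ (P *ᵥ (M *ᵥ eh t + w t)) with hddef
  -- derivative of V
  have hV : ∀ t : ℝ, 0 ≤ t → HasDerivAt V (d t) t := by
    intro t ht
    have hi : ∀ i, HasDerivAt (fun s => eh s i) ((M *ᵥ eh t + w t) i) t :=
      fun i => hasDerivAt_pi.1 (hde t ht) i
    have key : HasDerivAt (fun s => ∑ i, ∑ j, P i j * (eh s i * eh s j))
        (∑ i, ∑ j, P i j * ((M *ᵥ eh t + w t) i * eh t j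
          + eh t i * (M *ᵥ eh t + w t) j)) t := by
      refine HasDerivAt.fun_sum fun i _ => HasDerivAt.fun_sum fun j _ => ?_
      exact ((hi i).mul (hi j)).const_mul _
    have hfun : V = fun s => ∑ i, ∑ j, P i j * (eh s i * eh s j) := by
      funext s
      simp only [hVdef, dotProduct, Matrix.mulVec, Finset.mul_sum]
      exact Finset.sum_congr rfl fun i _ => Finset.sum_congr rfl fun j _ => by ring
    have hder : d t = ∑ i, ∑ j, P i j * ((M *ᵥ eh t + w t) i * eh t j
          + eh t i * (M *ᵥ eh t + w t) j) := by
      simp only [hddef, dotProduct, Matrix.mulVec, mul_add, Finset.sum_add_distrib,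
        Finset.mul_sum]
      congr 1 <;>
        exact Finset.sum_congr rfl fun i _ => Finset.sum_congr rfl fun j _ => by ring
    rw [hfun, hder]
    exact key
  -- rewrite d t as the LMI left-hand side
  have hd_eq : ∀ t : ℝ, d t = eh t ⬝ᵥ ((Mᵀ * P + P * M) *ᵥ eh t)
      + 2 * (eh t ⬝ᵥ (P *ᵥ w t)) := by
    intro t
    have h1 : eh t ⬝ᵥ ((Mᵀ * P) *ᵥ eh t) = (M *ᵥ eh t) ⬝ᵥ (P *ᵥ eh t) := by
      rw [← Matrix.mulVec_mulVec, Matrix.dotProduct_mulVec, Matrix.vecMul_transpose]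
    have h2 : eh t ⬝ᵥ (P *ᵥ w t) = w t ⬝ᵥ (P *ᵥ eh t) := by
      rw [Matrix.dotProduct_mulVec, ← Matrix.mulVec_transpose, hPt, dotProduct_comm]
    have h3 : eh t ⬝ᵥ (P *ᵥ (M *ᵥ eh t)) = eh t ⬝ᵥ ((P * M) *ᵥ eh t) := by
      rw [Matrix.mulVec_mulVec]
    simp only [hddef, Matrix.add_mulVec, add_dotProduct, dotProduct_add,
      Matrix.mulVec_add]
    rw [h1, h3, h2]
    ring
  -- differential inequality
  have hd_le : ∀ t : ℝ, 0 ≤ t → d t ≤ -lamE * V t + c := by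
    intro t ht
    have hL := hLMI (eh t) (w t)
    have hwt : ν2 * n * ‖w t‖ ^ 2 ≤ c := by
      have h := hw t ht
      have : ‖w t‖ ^ 2 ≤ db ^ 2 := by nlinarith [norm_nonneg (w t)]
      rw [hc]
      exact mul_le_mul_of_nonneg_left this (by positivity)
    have hVle : lamE * V t ≤ ν1 * ‖eh t‖ ^ 2 := by
      have hv1 : V t ≤ b * ((n : ℝ) * ‖eh t‖ ^ 2) :=
        le_trans (hquad_ub (eh t)) (mul_le_mul_of_nonneg_left (dot_le_norm_sq _) hb_pos.le)
      have heq : lamE * (b * ((n : ℝ) * ‖eh t‖ ^ 2)) = ν1 * ‖eh t‖ ^ 2 := by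
        rw [hlamE]
        field_simp
      calc lamE * V t ≤ lamE * (b * ((n : ℝ) * ‖eh t‖ ^ 2)) :=
            mul_le_mul_of_nonneg_left hv1 hlamE_pos.le
        _ = ν1 * ‖eh t‖ ^ 2 := heq
    rw [hd_eq t]
    calc eh t ⬝ᵥ ((Mᵀ * P + P * M) *ᵥ eh t) + 2 * (eh t ⬝ᵥ (P *ᵥ w t))
        ≤ -ν1 * ‖eh t‖ ^ 2 + ν2 * n * ‖w t‖ ^ 2 := hL
      _ ≤ -lamE * V t + c := by nlinarith [hwt, hVle]
  -- Gronwall-type estimate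
  set g : ℝ → ℝ := fun t => (V t - c / lamE) * Real.exp (lamE * t) with hgdef
  have hg' : ∀ t : ℝ, 0 ≤ t → HasDerivAt g
      ((d t + lamE * V t - c) * Real.exp (lamE * t)) t := by
    intro t ht
    have hexp : HasDerivAt (fun s => Real.exp (lamE * s)) (Real.exp (lamE * t) * lamE) t := by
      simpa [mul_comm] using (HasDerivAt.exp ((hasDerivAt_id t).const_mul lamE))
    have := ((hV t ht).sub_const (c / lamE)).mul hexp
    refine this.congr_deriv ?_
    have hne' : lamE ≠ 0 := hlamE_pos.ne'
    have hcl : c / lamE * lamE = c := div_mul_cancel₀ c hne'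
    linear_combination (-Real.exp (lamE * t)) * hcl
  have hanti : AntitoneOn g (Set.Ici 0) := by
    refine antitoneOn_of_deriv_nonpos (convex_Ici 0) ?_ ?_ ?_
    · exact fun t ht => ((hg' t ht).continuousAt).continuousWithinAt
    · intro t ht
      rw [interior_Ici] at ht
      exact ((hg' t (le_of_lt ht)).differentiableAt).differentiableWithinAt
    · intro t ht
      rw [interior_Ici] at ht
      rw [(hg' t (le_of_lt ht)).deriv]
      have hdle := hd_le t (le_of_lt ht)
      have : d t + lamE * V t - c ≤ 0 := by linarith
      exact mul_nonpos_of_nonpos_of_nonneg this (Real.exp_nonneg _)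
  have hVbound : ∀ t : ℝ, 0 ≤ t → V t ≤ V 0 * Real.exp (-lamE * t) + c / lamE := by
    intro t ht
    have hgt := hanti (Set.self_mem_Ici) ht ht
    have hg0 : g 0 = V 0 - c / lamE := by simp [hgdef]
    have hgt' : (V t - c / lamE) * Real.exp (lamE * t) ≤ V 0 - c / lamE := by
      rw [← hg0]; exact hgt
    have hexp_pos : (0:ℝ) < Real.exp (lamE * t) := Real.exp_pos _
    have h1 : V t - c / lamE ≤ (V 0 - c / lamE) * Real.exp (-(lamE * t)) := by
      rw [Real.exp_neg, ← div_eq_mul_inv]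
      exact (le_div_iff₀ hexp_pos).mpr hgt'
    have h2 : (V 0 - c / lamE) * Real.exp (-(lamE * t)) ≤ V 0 * Real.exp (-(lamE * t)) := by
      have : 0 ≤ c / lamE := div_nonneg hc_nonneg hlamE_pos.le
      nlinarith [Real.exp_nonneg (-(lamE * t))]
    have : V t ≤ V 0 * Real.exp (-(lamE * t)) + c / lamE := by linarith
    simpa [neg_mul] using this
  -- final assembly
  intro t ht
  have hA0 : a * ‖eh t‖ ^ 2 ≤ V t :=
    le_trans (mul_le_mul_of_nonneg_left (norm_sq_le_dot _) ha_pos.le) (hquad_lb (eh t))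
  have hB0 : V 0 ≤ b * ((n : ℝ) * ‖eh 0‖ ^ 2) :=
    le_trans (hquad_ub (eh 0)) (mul_le_mul_of_nonneg_left (dot_le_norm_sq _) hb_pos.le)
  set A : ℝ := (n : ℝ) * b / a * Real.exp (-lamE * t) * ‖eh 0‖ ^ 2 with hAdef
  set B : ℝ := ν2 * n / (a * lamE) * db ^ 2 with hBdef
  have hexp0 : (0:ℝ) ≤ Real.exp (-lamE * t) := (Real.exp_pos _).le
  have hsq : ‖eh t‖ ^ 2 ≤ A + B := by
    have hVt := hVbound t ht
    have key : a * (A + B) = b * ((n : ℝ) * ‖eh 0‖ ^ 2) * Real.exp (-lamE * t) + c / lamE := by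
      have ha' : a ≠ 0 := ha_pos.ne'
      have hl' : lamE ≠ 0 := hlamE_pos.ne'
      rw [hAdef, hBdef, hc]
      field_simp
    have hstep : a * ‖eh t‖ ^ 2 ≤ a * (A + B) := by
      rw [key]
      calc a * ‖eh t‖ ^ 2 ≤ V t := hA0
        _ ≤ V 0 * Real.exp (-lamE * t) + c / lamE := hVt
        _ ≤ b * ((n : ℝ) * ‖eh 0‖ ^ 2) * Real.exp (-lamE * t) + c / lamE := by
            nlinarith [hB0, hexp0]
    exact le_of_mul_le_mul_left hstep ha_pos
  have hAnn : 0 ≤ (n : ℝ) * b / a * Real.exp (-lamE * t) := by positivity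
  have hBnn : 0 ≤ B := by
    rw [hBdef]; positivity
  have h5 : ‖eh t‖ ≤ Real.sqrt A + Real.sqrt B := by
    calc ‖eh t‖ = Real.sqrt (‖eh t‖ ^ 2) := (Real.sqrt_sq (norm_nonneg _)).symm
      _ ≤ Real.sqrt (A + B) := Real.sqrt_le_sqrt hsq
      _ ≤ Real.sqrt A + Real.sqrt B := sqrt_add_le' (by rw [hAdef]; positivity) hBnn
  have hsA : Real.sqrt A = Real.sqrt ((n : ℝ) * b / a) * Real.exp (-lamE * t / 2) * ‖eh 0‖ := by
    have he : Real.exp (-lamE * t) = Real.exp (-lamE * t / 2) * Real.exp (-lamE * t / 2) := by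
      rw [← Real.exp_add]; ring_nf
    rw [hAdef, Real.sqrt_mul hAnn, Real.sqrt_sq (norm_nonneg _),
      Real.sqrt_mul (by positivity), he, Real.sqrt_mul_self (Real.exp_nonneg _)]
  have hsB : Real.sqrt B = Real.sqrt (ν2 * n / (a * lamE)) * db := by
    rw [hBdef, Real.sqrt_mul (by positivity), Real.sqrt_sq hdb]
  calc ‖eh t‖ ≤ Real.sqrt A + Real.sqrt B := h5
    _ = Real.sqrt ((n : ℝ) * b / a) * Real.exp (-lamE * t / 2) * ‖eh 0‖
        + Real.sqrt (ν2 * n / (a * lamE)) * db := by rw [hsA, hsB]
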